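/- Let 𝒫 = {P_n : n ≥ 1} with P_n({0}) = 1 − 1/n and P_n({n}) = 1/n, and let φ(x) = min(1, (1 − x)⁺). Then for every real x ≥ 0 and every integer n ≥ 1, sup_{m ≥ 1} E_{P_m}[φ((x + Y)/n)] = φ(x/n), where Y denotes the identity random variable on ℕ distributed according to P_m. -/

import Mathlib

open MeasureTheory
open scoped ENNReal

/-- The family Q_n = (1 − 1/n)·δ_0 + (1/n)·δ_n on ℕ (for n ≥ 1). -/
noncomputable def Qmeas (n : ℕ) : Measure ℕ :=
  if n = 0 then Measure.dirac 0
  else (1 - 1 / (n : ℝ≥0∞)) • Measure.dirac 0 + (1 / (n : ℝ≥0∞)) • Measure.dirac n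

lemma integrable_dirac_nat (f : ℕ → ℝ) (a : ℕ) : Integrable f (Measure.dirac a) := by
  refine ⟨(measurable_from_top).aestronglyMeasurable, ?_⟩
  simp [HasFiniteIntegral, lintegral_dirac]

lemma integral_Qmeas (f : ℕ → ℝ) (m : ℕ) (hm : 1 ≤ m) :
    ∫ y, f y ∂(Qmeas m) = (1 - 1/(m:ℝ)) * f 0 + (1/(m:ℝ)) * f m := by
  have hm0 : m ≠ 0 := by omega
  have hmE : (m : ℝ≥0∞) ≠ 0 := by exact_mod_cast hm0
  have hmT : (m : ℝ≥0∞) ≠ ⊤ := ENNReal.natCast_ne_top m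
  have h1 : (1 - 1/(m:ℝ≥0∞)) ≠ ⊤ := by
    exact ne_top_of_le_ne_top (by simp) tsub_le_self
  have h2 : (1/(m:ℝ≥0∞)) ≠ ⊤ := by simp [hmE]
  rw [Qmeas, if_neg hm0, integral_add_measure
    ((integrable_dirac_nat f 0).smul_measure h1)
    ((integrable_dirac_nat f m).smul_measure h2),
    integral_smul_measure, integral_smul_measure, integral_dirac, integral_dirac]
  have hle : (1/(m:ℝ≥0∞)) ≤ 1 := by
    rw [ENNReal.div_le_iff hmE hmT]; simpa using hm
  have ht1 : (1 - 1/(m:ℝ≥0∞)).toReal = 1 - 1/(m:ℝ) := by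
    rw [ENNReal.toReal_sub_of_le hle (by simp)]
    simp [ENNReal.toReal_div]
  have ht2 : (1/(m:ℝ≥0∞)).toReal = 1/(m:ℝ) := by simp [ENNReal.toReal_div]
  rw [ht1, ht2]; simp only [smul_eq_mul]

/-- With φ(x) = min(1, (1 − x)⁺), for every x ≥ 0 and integer n ≥ 1,
    sup_{m ≥ 1} E_{Q_m}[φ((x + Y)/n)] = φ(x/n), where Y is the identity on ℕ. -/
theorem stmt_11 (φ : ℝ → ℝ) (hφ : φ = fun x => min 1 (max (1 - x) 0))
    (x : ℝ) (hx : 0 ≤ x) (n : ℕ) (hn : 1 ≤ n) :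
    (⨆ m : {m : ℕ // 1 ≤ m}, ∫ y : ℕ, φ ((x + (y : ℝ)) / (n : ℝ)) ∂(Qmeas m)) =
      φ (x / (n : ℝ)) := by
  have hφ0 : ∀ a, 0 ≤ φ a := by
    intro a; rw [hφ]; exact le_min (by norm_num) (le_max_right _ _)
  have hφ1 : ∀ a, φ a ≤ 1 := by intro a; rw [hφ]; exact min_le_left _ _
  have hmono : ∀ a b : ℝ, a ≤ b → φ b ≤ φ a := by
    intro a b hab; rw [hφ]; dsimp only
    exact min_le_min le_rfl (max_le_max (by linarith) le_rfl)
  set A := φ (x / (n : ℝ)) with hA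
  have hI : ∀ m : {m : ℕ // 1 ≤ m},
      (∫ y : ℕ, φ ((x + (y : ℝ)) / (n : ℝ)) ∂(Qmeas m))
        = (1 - 1/((m:ℕ):ℝ)) * A + (1/((m:ℕ):ℝ)) * φ ((x + (m:ℕ)) / (n : ℝ)) := by
    intro m
    rw [integral_Qmeas _ _ m.2]
    norm_num
    exact Or.inl hA.symm
  have hnpos : (0:ℝ) < n := by exact_mod_cast hn
  have hub : ∀ m : {m : ℕ // 1 ≤ m},
      (∫ y : ℕ, φ ((x + (y : ℝ)) / (n : ℝ)) ∂(Qmeas m)) ≤ A := by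
    intro m
    rw [hI m]
    have hm1 : (1:ℝ) ≤ (m:ℕ) := by exact_mod_cast m.2
    have hinv : 0 < 1/((m:ℕ):ℝ) := by positivity
    have hinv1 : 1/((m:ℕ):ℝ) ≤ 1 := by
      rw [div_le_one (by linarith)]; exact hm1
    have hB : φ ((x + (m:ℕ)) / (n : ℝ)) ≤ A := by
      apply hmono
      have : (0:ℝ) ≤ (m:ℕ) := Nat.cast_nonneg _
      gcongr
      linarith
    nlinarith [hφ0 ((x + (m:ℕ)) / (n : ℝ))]
  have hbdd : BddAbove (Set.range fun m : {m : ℕ // 1 ≤ m} =>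
      ∫ y : ℕ, φ ((x + (y : ℝ)) / (n : ℝ)) ∂(Qmeas m)) := by
    exact ⟨A, by rintro _ ⟨m, rfl⟩; exact hub m⟩
  refine le_antisymm (ciSup_le hub) ?_
  refine le_of_forall_pos_le_add ?_
  intro ε hε
  obtain ⟨k, hk⟩ := exists_nat_one_div_lt hε
  set m : {m : ℕ // 1 ≤ m} := ⟨k + 1, by omega⟩
  have hle := le_ciSup hbdd m
  have hm1 : (1:ℝ) ≤ ((k+1:ℕ):ℝ) := by exact_mod_cast Nat.one_le_iff_ne_zero.mpr (by omega)
  have hIm := hI m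
  have hinv : 0 < 1/(((k+1:ℕ)):ℝ) := by positivity
  have hkk : 1/(((k+1:ℕ)):ℝ) < ε := by push_cast; push_cast at hk; linarith
  have hA1 : A ≤ 1 := hφ1 _
  have hA0 : 0 ≤ A := hφ0 _
  have hB0 : 0 ≤ φ ((x + ((k+1:ℕ):ℝ)) / (n : ℝ)) := hφ0 _
  have : A - ε ≤ (∫ y : ℕ, φ ((x + (y : ℝ)) / (n : ℝ)) ∂(Qmeas m)) := by
    rw [hIm]
    simp only [m]
    nlinarith
  linarith
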